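/- Let E = EuclideanSpace ℝ (Fin m) with m ≥ 2, let x, y ∈ E with x ≠ y, and let z ∈ openSegment ℝ x y. Then: (i) every continuous curve γ : [0,1] → E with γ(0) = x, γ(1) = y whose image avoids z satisfies eVariationOn γ [0,1] > dist x y (strict inequality in [0,∞]); and (ii) for every ε > 0 there exists such a curve with eVariationOn γ [0,1] < dist x y + ε. Consequently the punctured space E ∖ {z} is not geodesically convex: x and y are not joined in E ∖ {z} by any curve of minimal length, although the infimum of lengths equals dist x y. -/

import Mathlib

open Real Set
open scoped ENNReal

-- lower bound lemma
theorem aux_lower {m : ℕ} {x y z : EuclideanSpace ℝ (Fin m)} (hxy : x ≠ y)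
    (hz : z ∈ openSegment ℝ x y) (γ : ℝ → EuclideanSpace ℝ (Fin m))
    (hγ : ContinuousOn γ (Set.Icc 0 1)) (h0 : γ 0 = x) (h1 : γ 1 = y)
    (himg : z ∉ γ '' Set.Icc 0 1) :
    ENNReal.ofReal (dist x y) < eVariationOn γ (Set.Icc 0 1) := by
  set d := dist x y with hd
  rw [openSegment_eq_image'] at hz
  obtain ⟨b, hb, rfl⟩ := hz
  by_contra hcon
  push_neg at hcon
  -- key pointwise bound
  have key : ∀ t ∈ Set.Icc (0:ℝ) 1, dist x (γ t) + dist (γ t) y ≤ d := by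
    intro t ht
    have hadd := eVariationOn.Icc_add_Icc γ (s := Set.Icc (0:ℝ) 1) ht.1 ht.2 ht
    have e1 : edist (γ 0) (γ t) ≤ eVariationOn γ (Set.Icc (0:ℝ) 1 ∩ Set.Icc 0 t) :=
      eVariationOn.edist_le γ ⟨⟨le_rfl, zero_le_one⟩, ⟨le_rfl, ht.1⟩⟩ ⟨ht, ⟨ht.1, le_rfl⟩⟩
    have e2 : edist (γ t) (γ 1) ≤ eVariationOn γ (Set.Icc (0:ℝ) 1 ∩ Set.Icc t 1) :=
      eVariationOn.edist_le γ ⟨ht, ⟨le_rfl, ht.2⟩⟩ ⟨⟨zero_le_one, le_rfl⟩, ⟨ht.2, le_rfl⟩⟩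
    have e3 : edist (γ 0) (γ t) + edist (γ t) (γ 1) ≤ eVariationOn γ (Set.Icc (0:ℝ) 1) := by
      calc edist (γ 0) (γ t) + edist (γ t) (γ 1)
          ≤ eVariationOn γ (Set.Icc (0:ℝ) 1 ∩ Set.Icc 0 t)
            + eVariationOn γ (Set.Icc (0:ℝ) 1 ∩ Set.Icc t 1) := add_le_add e1 e2
        _ = eVariationOn γ (Set.Icc (0:ℝ) 1 ∩ Set.Icc 0 1) := hadd
        _ = eVariationOn γ (Set.Icc (0:ℝ) 1) := by rw [Set.inter_self]
    have e4 := e3.trans hcon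
    rw [h0, h1, edist_dist, edist_dist, ← ENNReal.ofReal_add dist_nonneg dist_nonneg] at e4
    exact (ENNReal.ofReal_le_ofReal_iff dist_nonneg).1 e4
  -- IVT to find the point at distance b*d from x
  have hd0 : 0 < d := dist_pos.mpr hxy
  have hf : ContinuousOn (fun t => dist x (γ t)) (Set.Icc (0:ℝ) 1) :=
    (continuous_const.dist continuous_id).comp_continuousOn hγ
  have hmem : b * d ∈ Set.Icc (dist x (γ 0)) (dist x (γ 1)) := by
    rw [h0, h1, dist_self]
    exact ⟨mul_nonneg hb.1.le hd0.le, by nlinarith [hb.1, hb.2]⟩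
  obtain ⟨t, ht, hft⟩ := intermediate_value_Icc zero_le_one hf hmem
  simp only at hft
  have h1t := key t ht
  have h2t : d ≤ dist x (γ t) + dist (γ t) y := dist_triangle x (γ t) y
  have hd2 : dist (γ t) y = (1 - b) * d := by linarith
  have hline : γ t = AffineMap.lineMap x y b :=
    eq_lineMap_of_dist_eq_mul_of_dist_eq_mul hft hd2
  refine himg ⟨t, ht, ?_⟩
  rw [hline, AffineMap.lineMap_apply_module]
  module

theorem aux_upper {m : ℕ} (hm : 2 ≤ m) {x y z : EuclideanSpace ℝ (Fin m)} (hxy : x ≠ y)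
    (hz : z ∈ openSegment ℝ x y) (ε : ℝ) (hε : 0 < ε) :
    ∃ γ : ℝ → EuclideanSpace ℝ (Fin m),
      ContinuousOn γ (Set.Icc 0 1) ∧ γ 0 = x ∧ γ 1 = y ∧ z ∉ γ '' Set.Icc 0 1 ∧
      eVariationOn γ (Set.Icc 0 1) < ENNReal.ofReal (dist x y + ε) := by
  set w : EuclideanSpace ℝ (Fin m) := y - x with hw
  have hw0 : w ≠ 0 := sub_ne_zero.mpr (Ne.symm hxy)
  -- find a unit vector orthogonal to w
  obtain ⟨v, hv_mem, hv0⟩ : ∃ v, v ∈ (ℝ ∙ w)ᗮ ∧ v ≠ 0 := by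
    apply Submodule.exists_mem_ne_zero_of_ne_bot
    intro hbot
    have h1 : Module.finrank ℝ (ℝ ∙ w) + Module.finrank ℝ (ℝ ∙ w)ᗮ
        = Module.finrank ℝ (EuclideanSpace ℝ (Fin m)) :=
      Submodule.finrank_add_finrank_orthogonal _
    rw [hbot, finrank_span_singleton hw0, finrank_euclideanSpace_fin] at h1
    simp at h1
    omega
  set v₁ : EuclideanSpace ℝ (Fin m) := ‖v‖⁻¹ • v with hv₁
  have hv₁norm : ‖v₁‖ = 1 := norm_smul_inv_norm hv0
  have horth : inner ℝ w v₁ = (0 : ℝ) := by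
    have := hv_mem w (Submodule.mem_span_singleton_self w)
    rw [hv₁, inner_smul_right, this, mul_zero]
  set δ : ℝ := ε / 2 with hδ
  have hδ0 : 0 < δ := by positivity
  set γ : ℝ → EuclideanSpace ℝ (Fin m) :=
    fun t => x + t • w + (δ * min t (1 - t)) • v₁ with hγdef
  -- Lipschitz
  have hlip : LipschitzWith (‖w‖ + δ).toNNReal γ := by
    apply LipschitzWith.of_dist_le_mul
    intro s t
    rw [Real.coe_toNNReal _ (by positivity)]
    have h1 : γ s - γ t = (s - t) • w + ((δ * min s (1 - s)) - (δ * min t (1 - t))) • v₁ := by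
      simp only [hγdef]
      module
    have h2 : |min s (1 - s) - min t (1 - t)| ≤ |s - t| := by
      refine (abs_min_sub_min_le_max s (1-s) t (1-t)).trans ?_
      apply max_le le_rfl
      rw [show (1:ℝ) - s - (1 - t) = -(s - t) by ring, abs_neg]
    calc dist (γ s) (γ t) = ‖(s - t) • w + ((δ * min s (1 - s)) - (δ * min t (1 - t))) • v₁‖ := by
          rw [dist_eq_norm, h1]
      _ ≤ ‖(s - t) • w‖ + ‖((δ * min s (1 - s)) - (δ * min t (1 - t))) • v₁‖ := norm_add_le _ _
      _ = |s - t| * ‖w‖ + |δ * min s (1 - s) - δ * min t (1 - t)| := by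
          rw [norm_smul, norm_smul, hv₁norm, Real.norm_eq_abs, Real.norm_eq_abs, mul_one]
      _ ≤ |s - t| * ‖w‖ + δ * |s - t| := by
          rw [← mul_sub, abs_mul, abs_of_pos hδ0]
          exact add_le_add le_rfl (by nlinarith [h2, abs_nonneg (s - t)])
      _ = (‖w‖ + δ) * dist s t := by rw [Real.dist_eq]; ring
  refine ⟨γ, hlip.continuous.continuousOn, ?_, ?_, ?_, ?_⟩
  · simp [hγdef]
  · simp [hγdef, hw]
  · -- avoids z
    rw [openSegment_eq_image'] at hz
    obtain ⟨b, hb, rfl⟩ := hz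
    rintro ⟨t, ht, hteq⟩
    simp only [hγdef] at hteq
    have heq : (t - b) • w + (δ * min t (1 - t)) • v₁ = 0 := by
      have : x + t • w + (δ * min t (1 - t)) • v₁ - (x + b • (y - x)) = 0 := by
        rw [hteq]; simp
      rw [← this, ← hw]
      module
    have hm0 : min t (1 - t) = 0 := by
      have h := congrArg (fun u : EuclideanSpace ℝ (Fin m) => (inner ℝ u v₁ : ℝ)) heq
      simp only [inner_add_left, real_inner_smul_left, horth, mul_zero, zero_add,
        inner_zero_left, real_inner_self_eq_norm_sq, hv₁norm, one_pow, mul_one] at h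
      rcases mul_eq_zero.mp h with h | h
      · exact absurd h hδ0.ne'
      · exact h
    rw [hm0, mul_zero, zero_smul, add_zero, smul_eq_zero, sub_eq_zero] at heq
    rcases heq with rfl | h
    · have : 0 < min t (1 - t) := lt_min hb.1 (by linarith [hb.2])
      exact absurd hm0 this.ne'
    · exact hw0 h
  · -- length bound
    have hmap : Set.MapsTo (id : ℝ → ℝ) (Set.Icc (0:ℝ) 1) (Set.Icc (0:ℝ) 1) := Set.mapsTo_id _
    have hcomp : eVariationOn γ (Set.Icc 0 1)
        ≤ (‖w‖ + δ).toNNReal * eVariationOn id (Set.Icc (0:ℝ) 1) :=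
      hlip.lipschitzOnWith.comp_eVariationOn_le hmap
    have hid : eVariationOn (id : ℝ → ℝ) (Set.Icc (0:ℝ) 1) ≤ ENNReal.ofReal 1 := by
      have := (monotone_id.monotoneOn (Set.Icc (0:ℝ) 1)).eVariationOn_le
        (Set.left_mem_Icc.2 zero_le_one) (Set.right_mem_Icc.2 zero_le_one)
      simpa using this
    calc eVariationOn γ (Set.Icc 0 1)
        ≤ (‖w‖ + δ).toNNReal * eVariationOn id (Set.Icc (0:ℝ) 1) := hcomp
      _ ≤ (‖w‖ + δ).toNNReal * ENNReal.ofReal 1 := by gcongr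
      _ = ENNReal.ofReal (‖w‖ + δ) := by
          rw [ENNReal.ofReal_one, mul_one, ENNReal.ofReal, ENNReal.coe_inj]
      _ < ENNReal.ofReal (dist x y + ε) := by
          rw [ENNReal.ofReal_lt_ofReal_iff (by positivity)]
          have : ‖w‖ = dist x y := by rw [hw, dist_eq_norm']
          rw [this, hδ]
          linarith

/-- **Punctured Euclidean space is not geodesically convex.** Let `E = ℝ^m` (`m ≥ 2`),
`x ≠ y`, and `z` a point of the open segment between them. Then (i) every continuous curve
from `x` to `y` avoiding `z` has length strictly greater than `dist x y`; (ii) for every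
`ε > 0` there is such a curve of length `< dist x y + ε`; hence the infimum of lengths of
curves from `x` to `y` in `E \ {z}` equals `dist x y` and is not attained. -/
theorem punctured_euclidean_not_geodesically_convex
    {m : ℕ} (hm : 2 ≤ m) {x y z : EuclideanSpace ℝ (Fin m)} (hxy : x ≠ y)
    (hz : z ∈ openSegment ℝ x y) :
    (∀ γ : ℝ → EuclideanSpace ℝ (Fin m), ContinuousOn γ (Set.Icc 0 1) →
      γ 0 = x → γ 1 = y → z ∉ γ '' Set.Icc 0 1 →
      ENNReal.ofReal (dist x y) < eVariationOn γ (Set.Icc 0 1)) ∧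
    (∀ ε : ℝ, 0 < ε → ∃ γ : ℝ → EuclideanSpace ℝ (Fin m),
      ContinuousOn γ (Set.Icc 0 1) ∧ γ 0 = x ∧ γ 1 = y ∧ z ∉ γ '' Set.Icc 0 1 ∧
      eVariationOn γ (Set.Icc 0 1) < ENNReal.ofReal (dist x y + ε)) ∧
    sInf {L : ℝ≥0∞ | ∃ γ : ℝ → EuclideanSpace ℝ (Fin m),
        ContinuousOn γ (Set.Icc 0 1) ∧ γ 0 = x ∧ γ 1 = y ∧ z ∉ γ '' Set.Icc 0 1 ∧
        L = eVariationOn γ (Set.Icc 0 1)}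
      = ENNReal.ofReal (dist x y) := by
  refine ⟨fun γ hγ h0 h1 himg => aux_lower hxy hz γ hγ h0 h1 himg,
    fun ε hε => aux_upper hm hxy hz ε hε, ?_⟩
  apply le_antisymm
  · apply ENNReal.le_of_forall_pos_le_add
    intro ε hε _
    obtain ⟨γ, hγ, h0, h1, himg, hvar⟩ := aux_upper hm hxy hz ε (NNReal.coe_pos.mpr hε)
    calc sInf {L : ℝ≥0∞ | ∃ γ : ℝ → EuclideanSpace ℝ (Fin m),
          ContinuousOn γ (Set.Icc 0 1) ∧ γ 0 = x ∧ γ 1 = y ∧ z ∉ γ '' Set.Icc 0 1 ∧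
          L = eVariationOn γ (Set.Icc 0 1)}
        ≤ eVariationOn γ (Set.Icc 0 1) := sInf_le ⟨γ, hγ, h0, h1, himg, rfl⟩
      _ ≤ ENNReal.ofReal (dist x y + ε) := hvar.le
      _ = ENNReal.ofReal (dist x y) + ENNReal.ofReal ε :=
          ENNReal.ofReal_add dist_nonneg ε.coe_nonneg
      _ = ENNReal.ofReal (dist x y) + ε := by rw [ENNReal.ofReal_coe_nnreal]
  · apply le_sInf
    rintro L ⟨γ, hγ, h0, h1, himg, rfl⟩
    exact (aux_lower hxy hz γ hγ h0 h1 himg).le
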